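/- arXiv:2311.12470 — 4 statements merged into one kernel-verified Lean document; each statement's English description precedes it below -/
import Mathlib

section
/- For a real Dirichlet character χ, λ = χ ∗ 1, and any natural numbers d, l ≥ 1, we have λ(l) · λ(d) ≤ λ(d·l)². -/
open Finset Nat ArithmeticFunction

private lemma geom_zero (k : ℕ) : ∑ i ∈ range (k + 1), (0 : ℝ) ^ i = 1 := by
  rw [Finset.sum_eq_single_of_mem 0 (Finset.mem_range.2 (Nat.succ_pos k))]
  · simp
  · intro i _ hi
    exact zero_pow hi

private lemma geom_one (k : ℕ) : ∑ i ∈ range (k + 1), (1 : ℝ) ^ i = (k : ℝ) + 1 := by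
  simp

private lemma geom_neg_one (k : ℕ) :
    ∑ i ∈ range (k + 1), (-1 : ℝ) ^ i = if Even k then 1 else 0 := by
  rw [neg_one_geom_sum]
  rcases Nat.even_or_odd k with h | h
  · simp [h, Nat.even_add_one, Nat.not_even_iff_odd.2 (Even.add_one h)]
  · simp [Nat.not_even_iff_odd.2 h, Nat.even_add_one]

private lemma geom_nonneg {c : ℝ} (hc : c = 0 ∨ c = 1 ∨ c = -1) (k : ℕ) :
    0 ≤ ∑ i ∈ range (k + 1), c ^ i := by
  rcases hc with rfl | rfl | rfl
  · rw [geom_zero]; norm_num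
  · rw [geom_one]; positivity
  · rw [geom_neg_one]; split <;> norm_num

private lemma geom_key {c : ℝ} (hc : c = 0 ∨ c = 1 ∨ c = -1) (a b : ℕ) :
    (∑ i ∈ range (a + 1), c ^ i) * (∑ i ∈ range (b + 1), c ^ i) ≤
      (∑ i ∈ range (a + b + 1), c ^ i) ^ 2 := by
  rcases hc with rfl | rfl | rfl
  · rw [geom_zero, geom_zero, geom_zero]; norm_num
  · rw [geom_one, geom_one, geom_one]
    push_cast
    nlinarith [Nat.cast_nonneg (α := ℝ) a, Nat.cast_nonneg (α := ℝ) b]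
  · rw [geom_neg_one, geom_neg_one, geom_neg_one]
    rcases Nat.even_or_odd a with ha | ha <;> rcases Nat.even_or_odd b with hb | hb
    · simp [ha, hb, Even.add ha hb]
    · simp [ha, Nat.not_even_iff_odd.2 hb]; positivity
    · simp [hb, Nat.not_even_iff_odd.2 ha]; positivity
    · simp [Nat.not_even_iff_odd.2 ha, Nat.not_even_iff_odd.2 hb]; positivity

/-- For a real Dirichlet character `χ`, `λ = χ ∗ 1`, and `d, l ≥ 1`,
`λ(l)·λ(d) ≤ λ(d·l)²`. -/
theorem lambda_mul_le_sq (D : ℕ) (χ : DirichletCharacter ℝ D)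
    (hχ : ∀ m : ZMod D, χ m = 0 ∨ χ m = 1 ∨ χ m = -1)
    (d l : ℕ) (hd : 1 ≤ d) (hl : 1 ≤ l) :
    (∑ h ∈ l.divisors, χ h) * (∑ h ∈ d.divisors, χ h) ≤
      (∑ h ∈ (d * l).divisors, χ h) ^ 2 := by
  set f : ℕ → ℝ := fun n => ∑ h ∈ n.divisors, χ h with hf
  -- multiplicativity of f
  have hmul : ∀ x y : ℕ, Nat.Coprime x y → f (x * y) = f x * f y := by
    set χf : ArithmeticFunction ℝ := ⟨fun n => if n = 0 then 0 else χ n, by simp⟩ with hχf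
    have hχfm : χf.IsMultiplicative := by
      constructor
      · simp [hχf]
      · intro m n hmn
        rcases eq_or_ne m 0 with rfl | hm
        · rcases Nat.coprime_zero_left n |>.1 hmn with rfl
          simp [hχf]
        rcases eq_or_ne n 0 with rfl | hn
        · rcases Nat.coprime_zero_right m |>.1 hmn with rfl
          simp [hχf]
        simp [hχf, hm, hn, Nat.mul_eq_zero, Nat.cast_mul, map_mul]
    have hF : (χf * (ArithmeticFunction.zeta : ArithmeticFunction ℝ)).IsMultiplicative :=
      hχfm.mul isMultiplicative_zeta.natCast
    have hFeq : ∀ n : ℕ, (χf * (ArithmeticFunction.zeta : ArithmeticFunction ℝ)) n = f n := by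
      intro n
      rw [coe_mul_zeta_apply]
      apply Finset.sum_congr rfl
      intro i hi
      have : i ≠ 0 := Nat.pos_of_mem_divisors hi |>.ne'
      simp [hχf, this]
    intro x y hxy
    rw [← hFeq, ← hFeq, ← hFeq, hF.map_mul_of_coprime hxy]
  have hf1 : f 1 = 1 := by simp [hf]
  -- prime-power values
  have hpp : ∀ p : ℕ, p.Prime → ∀ k : ℕ,
      f (p ^ k) = ∑ i ∈ range (k + 1), (χ p) ^ i := by
    intro p hp k
    show ∑ h ∈ (p ^ k).divisors, (χ h : ℝ) = _
    rw [Nat.sum_divisors_prime_pow hp]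
    apply Finset.sum_congr rfl
    intro i _
    push_cast
    rw [map_pow]
  have hd0 : d ≠ 0 := by omega
  have hl0 : l ≠ 0 := by omega
  have hdl0 : d * l ≠ 0 := Nat.mul_ne_zero hd0 hl0
  -- factorizations
  set S : Finset ℕ := (d * l).primeFactors with hS
  have hSd : d.primeFactors ⊆ S := by
    rw [hS]
    exact Nat.primeFactors_mono ⟨l, rfl⟩ hdl0
  have hSl : l.primeFactors ⊆ S := by
    rw [hS]
    refine Nat.primeFactors_mono ⟨d, mul_comm d l⟩ hdl0
  have hprodd : f d = ∏ p ∈ S, f (p ^ d.factorization p) := by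
    rw [Nat.multiplicative_factorization f hmul hf1 hd0]
    exact Finsupp.prod_of_support_subset _ (by rwa [Nat.support_factorization]) _
      (fun p _ => by rw [pow_zero, hf1])
  have hprodl : f l = ∏ p ∈ S, f (p ^ l.factorization p) := by
    rw [Nat.multiplicative_factorization f hmul hf1 hl0]
    exact Finsupp.prod_of_support_subset _ (by rwa [Nat.support_factorization]) _
      (fun p _ => by rw [pow_zero, hf1])
  have hproddl : f (d * l) =
      ∏ p ∈ S, f (p ^ (d.factorization p + l.factorization p)) := by
    rw [Nat.multiplicative_factorization f hmul hf1 hdl0]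
    rw [Finsupp.prod_of_support_subset _ (by rw [Nat.support_factorization]) _
      (fun p _ => by rw [pow_zero, hf1])]
    apply Finset.prod_congr rfl
    intro p _
    rw [Nat.factorization_mul hd0 hl0, Finsupp.add_apply]
  show f l * f d ≤ f (d * l) ^ 2
  rw [hprodd, hprodl, hproddl, ← Finset.prod_mul_distrib, ← Finset.prod_pow]
  apply Finset.prod_le_prod
  · intro p hp
    have hp' : p.Prime := Nat.prime_of_mem_primeFactors hp
    rw [hpp p hp', hpp p hp']
    exact mul_nonneg (geom_nonneg (hχ p) _) (geom_nonneg (hχ p) _)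
  · intro p hp
    have hp' : p.Prime := Nat.prime_of_mem_primeFactors hp
    rw [hpp p hp', hpp p hp', hpp p hp']
    rw [mul_comm]
    exact geom_key (hχ p) _ _
end

section
/- For a real Dirichlet character χ with λ = χ ∗ 1 and Λ the von Mangoldt function, for every n ≥ 1 we have Λ(n) ≤ (λ ∗ Λ ∗ λ)(n), where the right side is the triple Dirichlet convolution evaluated at n. -/
open ArithmeticFunction
open scoped ArithmeticFunction.zeta

private lemma lambda_nonneg {D : ℕ} (χ : DirichletCharacter ℝ D)
    (hχ : ∀ m : ZMod D, χ m = 0 ∨ χ m = 1 ∨ χ m = -1) (m : ℕ) :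
    0 ≤ ∑ h ∈ m.divisors, χ h := by
  have key : 0 ≤ (ζ * toArithmeticFunction (χ ·)) m := by
    rcases eq_or_ne m 0 with rfl | hm
    · simp
    have hmul : (ζ * toArithmeticFunction (χ ·) : ArithmeticFunction ℝ).IsMultiplicative :=
      isMultiplicative_zeta.natCast.mul χ.isMultiplicative_toArithmeticFunction
    rw [hmul.multiplicative_factorization _ hm]
    refine Finset.prod_nonneg fun p hp ↦ ?_
    have hp' := Nat.prime_of_mem_primeFactors hp
    beta_reduce
    rw [coe_zeta_mul_apply]
    simp only [toArithmeticFunction, coe_zeta_mul_apply, coe_mk,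
      Nat.sum_divisors_prime_pow hp', pow_eq_zero_iff', hp'.ne_zero, ne_eq, false_and,
      ↓reduceIte, Nat.cast_pow, map_pow]
    rcases hχ p with h | h | h
    · refine Finset.sum_nonneg fun i _ ↦ ?_
      simp [h, pow_nonneg]
    · refine Finset.sum_nonneg fun i _ ↦ ?_
      simp [h]
    · simp only [h, neg_one_geom_sum]
      split_ifs
      exacts [le_rfl, zero_le_one]
  rcases eq_or_ne m 0 with rfl | hm
  · simp
  · rw [coe_zeta_mul_apply] at key
    refine le_trans key (le_of_eq (Finset.sum_congr rfl fun h hh ↦ ?_))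
    have : h ≠ 0 := Nat.pos_of_mem_divisors hh |>.ne'
    simp [toArithmeticFunction, this]

open ArithmeticFunction in
/-- For a real Dirichlet character `χ` and `λ = χ ∗ 1`, for every `n ≥ 1`,
`Λ(n) ≤ (λ ∗ Λ ∗ λ)(n)`. -/
theorem vonMangoldt_le_triple_conv (D : ℕ) (χ : DirichletCharacter ℝ D)
    (hχ : ∀ m : ZMod D, χ m = 0 ∨ χ m = 1 ∨ χ m = -1)
    (n : ℕ) (hn : 1 ≤ n) :
    (Λ n : ℝ) ≤
      ∑ ab ∈ n.divisorsAntidiagonal,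
        (∑ h ∈ ab.1.divisors, χ h) *
          (∑ cd ∈ ab.2.divisorsAntidiagonal, (Λ cd.1 : ℝ) * ∑ h ∈ cd.2.divisors, χ h) := by
  have hn0 : n ≠ 0 := by omega
  have hterm : ∀ ab ∈ n.divisorsAntidiagonal,
      0 ≤ (∑ h ∈ ab.1.divisors, χ h) *
        (∑ cd ∈ ab.2.divisorsAntidiagonal, (Λ cd.1 : ℝ) * ∑ h ∈ cd.2.divisors, χ h) := by
    intro ab _
    refine mul_nonneg (lambda_nonneg χ hχ _) (Finset.sum_nonneg fun cd _ ↦ ?_)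
    exact mul_nonneg vonMangoldt_nonneg (lambda_nonneg χ hχ _)
  have hmem : ((1, n) : ℕ × ℕ) ∈ n.divisorsAntidiagonal := by
    simp [Nat.mem_divisorsAntidiagonal, hn0]
  refine le_trans ?_ (Finset.single_le_sum hterm hmem)
  have hmem2 : ((n, 1) : ℕ × ℕ) ∈ n.divisorsAntidiagonal := by
    simp [Nat.mem_divisorsAntidiagonal, hn0]
  have h1 : (∑ h ∈ (1 : ℕ).divisors, χ h) = 1 := by simp
  rw [h1, one_mul]
  have hterm2 : ∀ cd ∈ n.divisorsAntidiagonal,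
      0 ≤ (Λ cd.1 : ℝ) * ∑ h ∈ cd.2.divisors, χ h :=
    fun cd _ ↦ mul_nonneg vonMangoldt_nonneg (lambda_nonneg χ hχ _)
  refine le_trans ?_ (Finset.single_le_sum hterm2 hmem2)
  simp
end

section
/- Let χ be a nonprincipal real Dirichlet character mod D and λ = χ ∗ 1. Then ∑_{d ≤ x} λ(d) = x·L(1,χ) + O(√(Dx)), where L(1,χ) = ∑_{n≥1} χ(n)/n and the implied constant is absolute. -/
open Finset Filter

namespace SumLambdaAsymp

variable {D : ℕ} (χ : DirichletCharacter ℝ D)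

noncomputable def Schi (N : ℕ) : ℝ := ∑ n ∈ Ioc 0 N, χ n

lemma abs_chi_le (hv : ∀ m : ZMod D, χ m = 0 ∨ χ m = 1 ∨ χ m = -1) (m : ZMod D) :
    |χ m| ≤ 1 := by
  rcases hv m with h | h | h <;> simp [h]

lemma abs_Schi_le_self (hv : ∀ m : ZMod D, χ m = 0 ∨ χ m = 1 ∨ χ m = -1) (N : ℕ) :
    |Schi χ N| ≤ N := by
  calc |Schi χ N| ≤ ∑ n ∈ Ioc 0 N, |χ (n : ℕ)| := Finset.abs_sum_le_sum_abs _ _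
    _ ≤ ∑ n ∈ Ioc 0 N, 1 := Finset.sum_le_sum fun n _ => abs_chi_le χ hv _
    _ = N := by simp

lemma sum_period [NeZero D] (hχ : χ ≠ 1) (N : ℕ) :
    ∑ n ∈ Ioc N (N + D), χ (n : ℕ) = 0 := by
  have key : ∑ n ∈ Ioc N (N + D), χ (n : ℕ) = ∑ m : ZMod D, χ m := by
    refine Finset.sum_nbij' (fun n => (n : ZMod D))
      (fun m => N + 1 + (m - ((N + 1 : ℕ) : ZMod D)).val) ?_ ?_ ?_ ?_ ?_
    · intro a _; exact Finset.mem_univ _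
    · intro b _
      have hval : (b - ((N + 1 : ℕ) : ZMod D)).val < D := ZMod.val_lt _
      simp only [Finset.mem_Ioc]
      omega
    · intro a ha
      simp only [Finset.mem_Ioc] at ha
      show N + 1 + ((a : ZMod D) - ((N + 1 : ℕ) : ZMod D)).val = a
      have h1 : ((a : ZMod D) - ((N+1 : ℕ) : ZMod D)) = ((a - (N+1) : ℕ) : ZMod D) := by
        rw [Nat.cast_sub (by omega)]
      rw [h1, ZMod.val_cast_of_lt (by omega)]
      omega
    · intro b _
      show ((N + 1 + (b - ((N + 1 : ℕ) : ZMod D)).val : ℕ) : ZMod D) = b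
      push_cast
      rw [ZMod.natCast_val, ZMod.cast_id]
      ring
    · intro a _; rfl
  rw [key]
  exact MulChar.sum_eq_zero_of_ne_one hχ

lemma Schi_period [NeZero D] (hχ : χ ≠ 1) (N : ℕ) :
    Schi χ (N + D) = Schi χ N := by
  unfold Schi
  rw [← Finset.sum_Ioc_consecutive _ (Nat.zero_le N) (Nat.le_add_right N D),
    sum_period χ hχ, add_zero]

lemma abs_Schi_le_D [NeZero D] (hχ : χ ≠ 1)
    (hv : ∀ m : ZMod D, χ m = 0 ∨ χ m = 1 ∨ χ m = -1) (N : ℕ) :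
    |Schi χ N| ≤ D := by
  induction N using Nat.strong_induction_on with
  | _ N ih =>
    rcases lt_or_ge N D with h | h
    · exact (abs_Schi_le_self χ hv N).trans (by exact_mod_cast h.le)
    · have hD : 0 < D := NeZero.pos D
      have h2 : N - D + D = N := Nat.sub_add_cancel h
      have hper := Schi_period χ hχ (N - D)
      rw [h2] at hper
      rw [hper]
      exact ih (N - D) (by omega)

lemma abs_Schi_le_sqrt [NeZero D] (hχ : χ ≠ 1)
    (hv : ∀ m : ZMod D, χ m = 0 ∨ χ m = 1 ∨ χ m = -1) (N : ℕ) :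
    |Schi χ N| ≤ Real.sqrt ((N : ℝ) * D) := by
  have h0 : (0:ℝ) ≤ |Schi χ N| := abs_nonneg _
  have hb : |Schi χ N| ^ 2 ≤ (N : ℝ) * D := by
    have := mul_le_mul (abs_Schi_le_self χ hv N) (abs_Schi_le_D χ hχ hv N) h0 (Nat.cast_nonneg N)
    nlinarith [sq_nonneg (|Schi χ N|)]
  calc |Schi χ N| = Real.sqrt (|Schi χ N| ^ 2) := (Real.sqrt_sq h0).symm
    _ ≤ Real.sqrt ((N:ℝ) * D) := Real.sqrt_le_sqrt hb

lemma tele_sum (f : ℕ → ℝ) (y : ℕ) : ∀ N, y ≤ N →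
    ∑ h ∈ Ioc y N, (f h - f (h + 1)) = f (y + 1) - f (N + 1) := by
  refine Nat.le_induction ?_ ?_
  · simp
  · intro N hyN ih
    rw [Finset.sum_Ioc_succ_top (by omega), ih]
    ring

lemma abel (y : ℕ) : ∀ N, y ≤ N →
    ∑ h ∈ Ioc y N, χ (h : ℕ) / h =
      (∑ h ∈ Ioc y N, Schi χ h * (1 / h - 1 / (h + 1)))
        + Schi χ N / (N + 1) - Schi χ y / (y + 1) := by
  refine Nat.le_induction ?_ ?_
  · simp
  · intro N hyN ih
    have hS : Schi χ (N + 1) = Schi χ N + χ ((N + 1 : ℕ)) := by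
      unfold Schi; rw [Finset.sum_Ioc_succ_top (Nat.zero_le N)]
    rw [Finset.sum_Ioc_succ_top (by omega), Finset.sum_Ioc_succ_top (by omega), ih, hS]
    push_cast
    ring

lemma tail_bound1 (hD : ∀ N, |Schi χ N| ≤ D) (y N : ℕ) (hyN : y ≤ N) :
    |∑ h ∈ Ioc y N, χ (h : ℕ) / h| ≤ 3 * D / (y + 1) := by
  rw [abel χ y N hyN]
  have hy1 : (0:ℝ) < (y:ℝ) + 1 := by positivity
  have hN1 : (0:ℝ) < (N:ℝ) + 1 := by positivity
  have hDnn : (0:ℝ) ≤ (D:ℝ) := Nat.cast_nonneg D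
  have hA : |∑ h ∈ Ioc y N, Schi χ h * (1 / h - 1 / (h + 1))| ≤
      (D:ℝ) / (y + 1) - (D:ℝ) / (N + 1) := by
    calc |∑ h ∈ Ioc y N, Schi χ h * (1 / h - 1 / (h + 1))|
        ≤ ∑ h ∈ Ioc y N, |Schi χ h * (1 / h - 1 / (h + 1))| :=
          Finset.abs_sum_le_sum_abs _ _
      _ ≤ ∑ h ∈ Ioc y N, ((D:ℝ) / h - (D:ℝ) / (h + 1)) := by
          apply Finset.sum_le_sum
          intro h hmem
          rw [Finset.mem_Ioc] at hmem
          have hh1 : (1:ℝ) ≤ (h:ℝ) := by exact_mod_cast Nat.one_le_iff_ne_zero.mpr (by omega)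
          have hpos : (0:ℝ) < (h:ℝ) := by linarith
          have hfrac : (0:ℝ) ≤ 1 / (h:ℝ) - 1 / ((h:ℝ) + 1) := by
            rw [sub_nonneg]
            apply one_div_le_one_div_of_le hpos; linarith
          rw [abs_mul, abs_of_nonneg hfrac]
          calc |Schi χ h| * (1 / (h:ℝ) - 1 / ((h:ℝ) + 1))
              ≤ (D:ℝ) * (1 / (h:ℝ) - 1 / ((h:ℝ) + 1)) :=
                mul_le_mul_of_nonneg_right (hD h) hfrac
            _ = (D:ℝ) / h - (D:ℝ) / (h + 1) := by ring
      _ = (D:ℝ) / (y + 1) - (D:ℝ) / (N + 1) := by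
          have := tele_sum (fun h : ℕ => (D:ℝ) / h) y N hyN
          simp only [Nat.cast_add, Nat.cast_one] at this ⊢
          rw [← this]
  have hB : |Schi χ N / ((N:ℝ) + 1)| ≤ (D:ℝ) / (N + 1) := by
    rw [abs_div, abs_of_pos hN1]
    exact (div_le_div_iff_of_pos_right hN1).mpr (hD N)
  have hC : |Schi χ y / ((y:ℝ) + 1)| ≤ (D:ℝ) / (y + 1) := by
    rw [abs_div, abs_of_pos hy1]
    exact (div_le_div_iff_of_pos_right hy1).mpr (hD y)
  have hDN : (D:ℝ) / (N + 1) ≤ (D:ℝ) / (y + 1) := by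
    apply div_le_div_of_nonneg_left hDnn hy1
    have : (y:ℝ) ≤ N := by exact_mod_cast hyN
    linarith
  have tri : ∀ a b c : ℝ, |a + b - c| ≤ |a| + |b| + |c| := by
    intro a b c
    rw [abs_le]
    constructor <;>
      linarith [neg_abs_le a, le_abs_self a, neg_abs_le b, le_abs_self b,
        neg_abs_le c, le_abs_self c]
  have h3 : 3 * (D:ℝ) / (y + 1) = 3 * ((D:ℝ) / (y + 1)) := by ring
  have hnn : (0:ℝ) ≤ (D:ℝ) / (y + 1) := by positivity
  calc |_ + Schi χ N / ((N:ℝ)+1) - Schi χ y / ((y:ℝ)+1)| ≤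
      |∑ h ∈ Ioc y N, Schi χ h * (1 / h - 1 / (h + 1))| + |Schi χ N / ((N:ℝ)+1)|
        + |Schi χ y / ((y:ℝ)+1)| := tri _ _ _
    _ ≤ 3 * D / (y + 1) := by rw [h3]; linarith

lemma key_sqrt_aux (s t w : ℝ) (hs : 0 < s) (ht : 0 < t) (hw : 0 ≤ w) :
    s * w * (1 / (s * s) - 1 / (t * t)) ≤ 2 * w / s - 2 * w / t := by
  rw [← sub_nonneg]
  have key : 2 * w / s - 2 * w / t - s * w * (1 / (s * s) - 1 / (t * t)) =
      w * ((t - s) * (t - s)) / (s * (t * t)) := by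
    field_simp
    ring
  rw [key]
  exact div_nonneg (mul_nonneg hw (mul_self_nonneg _)) (by positivity)

lemma key_sqrt (h : ℕ) (hh : 1 ≤ h) (Dr : ℝ) (hDr : 0 ≤ Dr) :
    Real.sqrt (h * Dr) * (1 / h - 1 / (h + 1)) ≤
      2 * Real.sqrt Dr / Real.sqrt h - 2 * Real.sqrt Dr / Real.sqrt (h + 1) := by
  have h1 : (1:ℝ) ≤ (h:ℝ) := by exact_mod_cast hh
  have e1 : Real.sqrt ((h:ℝ) * Dr) = Real.sqrt h * Real.sqrt Dr :=
    Real.sqrt_mul (by positivity) _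
  have hs : 0 < Real.sqrt (h:ℝ) := Real.sqrt_pos.mpr (by linarith)
  have ht : 0 < Real.sqrt ((h:ℝ)+1) := Real.sqrt_pos.mpr (by linarith)
  have hs2 : Real.sqrt (h:ℝ) * Real.sqrt (h:ℝ) = (h:ℝ) := Real.mul_self_sqrt (by linarith)
  have ht2 : Real.sqrt ((h:ℝ)+1) * Real.sqrt ((h:ℝ)+1) = (h:ℝ)+1 :=
    Real.mul_self_sqrt (by linarith)
  have := key_sqrt_aux (Real.sqrt (h:ℝ)) (Real.sqrt ((h:ℝ)+1)) (Real.sqrt Dr)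
    hs ht (Real.sqrt_nonneg _)
  rw [hs2, ht2] at this
  rw [e1]
  exact this

lemma sqrt_div_le (D N y : ℕ) (hyN : y ≤ N) :
    Real.sqrt ((N:ℝ) * D) / ((N:ℝ) + 1) ≤ Real.sqrt D / Real.sqrt ((y:ℝ) + 1) := by
  have hyr : (y:ℝ) ≤ N := by exact_mod_cast hyN
  have ht : 0 < Real.sqrt ((N:ℝ)+1) := Real.sqrt_pos.mpr (by positivity)
  have hy : 0 < Real.sqrt ((y:ℝ)+1) := Real.sqrt_pos.mpr (by positivity)
  have ht2 : Real.sqrt ((N:ℝ)+1) * Real.sqrt ((N:ℝ)+1) = (N:ℝ)+1 :=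
    Real.mul_self_sqrt (by positivity)
  have e1 : Real.sqrt ((N:ℝ) * D) = Real.sqrt N * Real.sqrt D :=
    Real.sqrt_mul (by positivity) _
  have hND : Real.sqrt (N:ℝ) ≤ Real.sqrt ((N:ℝ)+1) := Real.sqrt_le_sqrt (by linarith)
  have hyN' : Real.sqrt ((y:ℝ)+1) ≤ Real.sqrt ((N:ℝ)+1) := Real.sqrt_le_sqrt (by linarith)
  have hsd : (0:ℝ) ≤ Real.sqrt (D:ℝ) := Real.sqrt_nonneg _
  calc Real.sqrt ((N:ℝ) * D) / ((N:ℝ) + 1)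
      = Real.sqrt N * Real.sqrt D / (Real.sqrt ((N:ℝ)+1) * Real.sqrt ((N:ℝ)+1)) := by
        rw [e1, ht2]
    _ ≤ Real.sqrt ((N:ℝ)+1) * Real.sqrt D / (Real.sqrt ((N:ℝ)+1) * Real.sqrt ((N:ℝ)+1)) := by
        gcongr
    _ = Real.sqrt D / Real.sqrt ((N:ℝ)+1) := by
        rw [mul_div_mul_left _ _ (ne_of_gt ht)]
    _ ≤ Real.sqrt D / Real.sqrt ((y:ℝ)+1) := by
        apply div_le_div_of_nonneg_left hsd hy hyN'

lemma tail_bound2 (hsq : ∀ N, |Schi χ N| ≤ Real.sqrt ((N:ℝ) * D)) (y N : ℕ) (hyN : y ≤ N) :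
    |∑ h ∈ Ioc y N, χ (h : ℕ) / h| ≤ 4 * Real.sqrt D / Real.sqrt ((y:ℝ) + 1) := by
  rw [abel χ y N hyN]
  have hy1 : (0:ℝ) < (y:ℝ) + 1 := by positivity
  have hN1 : (0:ℝ) < (N:ℝ) + 1 := by positivity
  have hsy : 0 < Real.sqrt ((y:ℝ)+1) := Real.sqrt_pos.mpr hy1
  have hsN : 0 < Real.sqrt ((N:ℝ)+1) := Real.sqrt_pos.mpr hN1
  have hsd : (0:ℝ) ≤ Real.sqrt (D:ℝ) := Real.sqrt_nonneg _
  have hA : |∑ h ∈ Ioc y N, Schi χ h * (1 / h - 1 / (h + 1))| ≤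
      2 * Real.sqrt D / Real.sqrt ((y:ℝ)+1) - 2 * Real.sqrt D / Real.sqrt ((N:ℝ)+1) := by
    calc |∑ h ∈ Ioc y N, Schi χ h * (1 / h - 1 / (h + 1))|
        ≤ ∑ h ∈ Ioc y N, |Schi χ h * (1 / h - 1 / (h + 1))| :=
          Finset.abs_sum_le_sum_abs _ _
      _ ≤ ∑ h ∈ Ioc y N, (2 * Real.sqrt D / Real.sqrt (h:ℝ)
            - 2 * Real.sqrt D / Real.sqrt ((h:ℝ) + 1)) := by
          apply Finset.sum_le_sum
          intro h hmem
          rw [Finset.mem_Ioc] at hmem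
          have hh1n : 1 ≤ h := by omega
          have hh1 : (1:ℝ) ≤ (h:ℝ) := by exact_mod_cast hh1n
          have hpos : (0:ℝ) < (h:ℝ) := by linarith
          have hfrac : (0:ℝ) ≤ 1 / (h:ℝ) - 1 / ((h:ℝ) + 1) := by
            rw [sub_nonneg]
            apply one_div_le_one_div_of_le hpos; linarith
          rw [abs_mul, abs_of_nonneg hfrac]
          calc |Schi χ h| * (1 / (h:ℝ) - 1 / ((h:ℝ) + 1))
              ≤ Real.sqrt ((h:ℝ) * D) * (1 / (h:ℝ) - 1 / ((h:ℝ) + 1)) :=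
                mul_le_mul_of_nonneg_right (hsq h) hfrac
            _ ≤ 2 * Real.sqrt D / Real.sqrt (h:ℝ) - 2 * Real.sqrt D / Real.sqrt ((h:ℝ) + 1) :=
                key_sqrt h hh1n D (Nat.cast_nonneg D)
      _ ≤ 2 * Real.sqrt D / Real.sqrt ((y:ℝ)+1) - 2 * Real.sqrt D / Real.sqrt ((N:ℝ)+1) := by
          have := tele_sum (fun h : ℕ => 2 * Real.sqrt D / Real.sqrt (h:ℝ)) y N hyN
          simp only [Nat.cast_add, Nat.cast_one] at this
          rw [← this]
  have hB : |Schi χ N / ((N:ℝ) + 1)| ≤ Real.sqrt D / Real.sqrt ((y:ℝ)+1) := by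
    rw [abs_div, abs_of_pos hN1]
    exact le_trans ((div_le_div_iff_of_pos_right hN1).mpr (hsq N)) (sqrt_div_le D N y hyN)
  have hC : |Schi χ y / ((y:ℝ) + 1)| ≤ Real.sqrt D / Real.sqrt ((y:ℝ)+1) := by
    rw [abs_div, abs_of_pos hy1]
    exact le_trans ((div_le_div_iff_of_pos_right hy1).mpr (hsq y)) (sqrt_div_le D y y le_rfl)
  have tri : ∀ a b c : ℝ, |a + b - c| ≤ |a| + |b| + |c| := by
    intro a b c
    rw [abs_le]
    constructor <;>
      linarith [neg_abs_le a, le_abs_self a, neg_abs_le b, le_abs_self b,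
        neg_abs_le c, le_abs_self c]
  have hnn : (0:ℝ) ≤ 2 * Real.sqrt (D:ℝ) / Real.sqrt ((N:ℝ)+1) := by positivity
  have h4 : 4 * Real.sqrt (D:ℝ) / Real.sqrt ((y:ℝ)+1) =
      2 * Real.sqrt (D:ℝ) / Real.sqrt ((y:ℝ)+1) + Real.sqrt (D:ℝ) / Real.sqrt ((y:ℝ)+1)
        + Real.sqrt (D:ℝ) / Real.sqrt ((y:ℝ)+1) := by ring
  calc |_ + Schi χ N / ((N:ℝ)+1) - Schi χ y / ((y:ℝ)+1)| ≤
      |∑ h ∈ Ioc y N, Schi χ h * (1 / h - 1 / (h + 1))| + |Schi χ N / ((N:ℝ)+1)|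
        + |Schi χ y / ((y:ℝ)+1)| := tri _ _ _
    _ ≤ 4 * Real.sqrt D / Real.sqrt ((y:ℝ)+1) := by rw [h4]; linarith

lemma tail_limit (y : ℕ) (B : ℝ)
    (hB : ∀ N, y ≤ N → |∑ h ∈ Ioc y N, χ (h : ℕ) / h| ≤ B) (L : ℝ)
    (hL : Tendsto (fun N : ℕ => ∑ n ∈ Finset.range N, χ n / (n : ℝ)) atTop (nhds L)) :
    |L - ∑ h ∈ Ioc 0 y, χ (h : ℕ) / h| ≤ B := by
  have hshift : ∀ N : ℕ, ∑ n ∈ Finset.range (N + 1), χ n / (n : ℝ) =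
      ∑ n ∈ Ioc 0 N, χ (n : ℕ) / n := by
    intro N
    rw [Finset.range_eq_Ico, Finset.Ico_add_one_right_eq_Icc, Finset.Icc_eq_cons_Ioc (Nat.zero_le N),
      Finset.sum_cons]
    norm_num
  have hQ : Tendsto (fun N : ℕ => ∑ n ∈ Ioc 0 N, χ (n : ℕ) / n) atTop (nhds L) := by
    have := hL.comp (tendsto_add_atTop_nat 1)
    exact this.congr hshift
  have h2 : Tendsto (fun N : ℕ =>
      |(∑ n ∈ Ioc 0 N, χ (n : ℕ) / n) - ∑ h ∈ Ioc 0 y, χ (h : ℕ) / h|) atTop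
      (nhds |L - ∑ h ∈ Ioc 0 y, χ (h : ℕ) / h|) := by
    have := (hQ.sub (tendsto_const_nhds
      (x := ∑ h ∈ Ioc 0 y, χ (h : ℕ) / h) (f := atTop (α := ℕ)))).abs
    rw [abs_sub_comm] at this
    convert this using 2
    rw [abs_sub_comm]
  refine le_of_tendsto h2 ?_
  filter_upwards [eventually_ge_atTop y] with N hN
  have hsplit := Finset.sum_Ioc_consecutive (fun h : ℕ => χ (h : ℕ) / (h:ℝ)) (Nat.zero_le y) hN
  rw [← hsplit]
  simpa using hB N hN

lemma floor_close (x h : ℕ) (hh : 1 ≤ h) :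
    |((x / h : ℕ) : ℝ) - (x : ℝ) / h| ≤ 1 := by
  have hhr : (0:ℝ) < (h:ℝ) := by exact_mod_cast hh
  have h1 : ((x / h : ℕ) : ℝ) ≤ (x : ℝ) / h := Nat.cast_div_le
  have h2 : (x:ℝ) / h ≤ ((x / h : ℕ) : ℝ) + 1 := by
    rw [div_le_iff₀ hhr]
    have hlt : x < (x / h + 1) * h := by
      have h3 : x % h < h := Nat.mod_lt x hh
      have h4 := Nat.div_add_mod x h
      calc x = h * (x / h) + x % h := h4.symm
        _ < h * (x / h) + h := by omega
        _ = (x / h + 1) * h := by ring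
    calc (x:ℝ) ≤ (((x / h + 1) * h : ℕ) : ℝ) := by exact_mod_cast hlt.le
      _ = (((x / h : ℕ) : ℝ) + 1) * h := by push_cast; ring
  rw [abs_le]
  constructor <;> linarith

lemma div_sum (f : ℕ → ℝ) (x : ℕ) :
    ∑ d ∈ Ioc 0 x, ∑ h ∈ d.divisors, f h =
      ∑ h ∈ Ioc 0 x, f h * ((x / h : ℕ) : ℝ) := by
  rw [Finset.sum_comm' (t' := Ioc 0 x)
    (s' := fun h => (Ioc 0 x).filter (fun d => h ∣ d)) ?_]
  · apply Finset.sum_congr rfl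
    intro h hh
    rw [Finset.sum_const, Nat.Ioc_filter_dvd_card_eq_div, nsmul_eq_mul, mul_comm]
  · intro d h
    simp only [Finset.mem_Ioc, Nat.mem_divisors, Finset.mem_filter]
    constructor
    · rintro ⟨⟨hd0, hdx⟩, hdvd, hd0'⟩
      have h0 : 0 < h := Nat.pos_of_dvd_of_pos hdvd hd0
      have hle : h ≤ d := Nat.le_of_dvd hd0 hdvd
      exact ⟨⟨⟨hd0, hdx⟩, hdvd⟩, h0, hle.trans hdx⟩
    · rintro ⟨⟨⟨hd0, hdx⟩, hdvd⟩, _, _⟩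
      exact ⟨⟨hd0, hdx⟩, hdvd, by omega⟩

lemma hyper2 (x y : ℕ) :
    ∑ h ∈ Ioc y x, χ (h : ℕ) * ((x / h : ℕ) : ℝ) =
      ∑ m ∈ Ioc 0 (x / (y + 1)), (Schi χ (x / m) - Schi χ y) := by
  have step1 : ∀ h ∈ Ioc y x, χ (h : ℕ) * ((x / h : ℕ) : ℝ) =
      ∑ _m ∈ Ioc 0 (x / h), χ (h : ℕ) := by
    intro h _
    rw [Finset.sum_const, Nat.card_Ioc, nsmul_eq_mul, mul_comm, Nat.sub_zero]
  rw [Finset.sum_congr rfl step1]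
  rw [Finset.sum_comm' (t' := Ioc 0 (x / (y + 1))) (s' := fun m => Ioc y (x / m)) ?_]
  · apply Finset.sum_congr rfl
    intro m hm
    rw [Finset.mem_Ioc] at hm
    have hm0 : 0 < m := hm.1
    have hym : y + 1 ≤ x / m := by
      rw [Nat.le_div_iff_mul_le hm0]
      calc (y + 1) * m ≤ (x / (y+1)) * (y+1) := by
            rw [mul_comm]
            exact Nat.mul_le_mul hm.2 le_rfl
        _ ≤ x := Nat.div_mul_le_self x (y+1)
    have := Finset.sum_Ioc_consecutive (fun n : ℕ => (χ (n : ℕ) : ℝ)) (Nat.zero_le y)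
      (by omega : y ≤ x / m)
    unfold Schi
    linarith [this]
  · intro h m
    simp only [Finset.mem_Ioc]
    constructor
    · rintro ⟨⟨hyh, hhx⟩, hm0, hmxh⟩
      have hh0 : 0 < h := by omega
      have hmul : m * h ≤ x := (Nat.le_div_iff_mul_le hh0).mp hmxh
      refine ⟨⟨hyh, ?_⟩, hm0, ?_⟩
      · rw [Nat.le_div_iff_mul_le hm0, mul_comm]
        exact hmul
      · rw [Nat.le_div_iff_mul_le (by omega : 0 < y + 1)]
        calc m * (y + 1) ≤ m * h := Nat.mul_le_mul le_rfl (by omega)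
          _ ≤ x := hmul
    · rintro ⟨⟨hyh, hhxm⟩, hm0, _⟩
      have hh0 : 0 < h := by omega
      have hmul : h * m ≤ x := (Nat.le_div_iff_mul_le hm0).mp hhxm
      refine ⟨⟨hyh, ?_⟩, hm0, ?_⟩
      · calc h ≤ h * m := Nat.le_mul_of_pos_right h hm0
          _ ≤ x := hmul
      · rw [Nat.le_div_iff_mul_le hh0, mul_comm]
        exact hmul

end SumLambdaAsymp

open SumLambdaAsymp Finset Filter in
/-- For a nonprincipal real Dirichlet character `χ` mod `D` with `λ = χ ∗ 1`,
`∑_{d ≤ x} λ(d) = x·L(1,χ) + O(√(Dx))` with an absolute implied constant, where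
`L(1,χ) = ∑_{n ≥ 1} χ(n)/n`. -/
theorem sum_lambda_asymptotic :
    ∃ C : ℝ, 0 < C ∧
      ∀ (D : ℕ) (χ : DirichletCharacter ℝ D),
        χ ≠ 1 →
        (∀ m : ZMod D, χ m = 0 ∨ χ m = 1 ∨ χ m = -1) →
        ∀ L : ℝ,
          Filter.Tendsto (fun N : ℕ => ∑ n ∈ Finset.range N, χ n / (n : ℝ))
            Filter.atTop (nhds L) →
          ∀ x : ℕ, 1 ≤ x →
            |(∑ d ∈ Finset.Icc 1 x, ∑ h ∈ d.divisors, χ h) - (x : ℝ) * L| ≤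
              C * Real.sqrt ((D : ℝ) * (x : ℝ)) := by
  classical
  refine ⟨10, by norm_num, ?_⟩
  intro D χ hχ hv L hL x hx
  rcases Nat.eq_zero_or_pos D with hD0 | hDpos
  · subst hD0
    have hval1 : (χ ((1:ℕ) : ZMod 0) : ℝ) = 1 := by rw [Nat.cast_one, map_one]
    have hval2 : ∀ n : ℕ, 2 ≤ n → (χ (n : ZMod 0) : ℝ) = 0 := by
      intro n hn
      apply χ.map_nonunit
      intro hu
      have hu' : IsUnit ((n : ℕ) : ℤ) := hu
      rcases Int.isUnit_iff.mp hu' with h | h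
      · have : n = 1 := by exact_mod_cast h
        omega
      · have : (0:ℤ) ≤ (n:ℤ) := Int.natCast_nonneg n
        omega
    have hinner : ∀ d ∈ Finset.Icc 1 x, (∑ h ∈ d.divisors, (χ h : ℝ)) = 1 := by
      intro d hd
      rw [Finset.mem_Icc] at hd
      rw [Finset.sum_eq_single 1]
      · exact hval1
      · intro h hhmem hne
        have h0 : 0 < h := Nat.pos_of_mem_divisors hhmem
        exact hval2 h (by omega)
      · intro habs
        exact absurd (Nat.one_mem_divisors.mpr (by omega)) habs
    have hsum : (∑ d ∈ Finset.Icc 1 x, ∑ h ∈ d.divisors, (χ h : ℝ)) = x := by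
      rw [Finset.sum_congr rfl hinner]
      simp [Nat.card_Icc]
    have hPev : ∀ᶠ N in atTop, (∑ n ∈ Finset.range N, χ n / (n : ℝ)) = 1 := by
      filter_upwards [eventually_ge_atTop 2] with N hN
      rw [Finset.sum_eq_single 1]
      · rw [hval1, Nat.cast_one, div_one]
      · intro n hmem hne
        rcases Nat.eq_zero_or_pos n with h0 | h0
        · subst h0; norm_num
        · rw [hval2 n (by omega), zero_div]
      · intro habs
        exact absurd (Finset.mem_range.mpr (by omega)) habs
    have hL1 : L = 1 := tendsto_nhds_unique hL (Tendsto.congr' (hPev.mono fun N h => h.symm) tendsto_const_nhds)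
    rw [hsum, hL1]
    simp
  ·
    haveI : NeZero D := ⟨hDpos.ne'⟩
    have hIcc : Finset.Icc 1 x = Finset.Ioc 0 x := by rw [← Finset.Icc_add_one_left_eq_Ioc]; rfl
    rw [hIcc]
    have hSD : ∀ N, |Schi χ N| ≤ D := abs_Schi_le_D χ hχ hv
    have hsq : ∀ N, |Schi χ N| ≤ Real.sqrt ((N:ℝ) * D) := abs_Schi_le_sqrt χ hχ hv
    have hxr : (1:ℝ) ≤ (x:ℝ) := by exact_mod_cast hx
    have hDr : (1:ℝ) ≤ (D:ℝ) := by exact_mod_cast hDpos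
    have hsqDx : (0:ℝ) < Real.sqrt ((D:ℝ) * x) := Real.sqrt_pos.mpr (by nlinarith)
    have tri3 : ∀ a b c : ℝ, |a + b + c| ≤ |a| + |b| + |c| := by
      intro a b c
      calc |a + b + c| ≤ |a + b| + |c| := abs_add_le _ _
        _ ≤ |a| + |b| + |c| := by gcongr; exact abs_add_le _ _
    have decomp : ∀ y : ℕ, y ≤ x →
        (∑ d ∈ Finset.Ioc 0 x, ∑ h ∈ d.divisors, (χ h:ℝ)) - (x:ℝ) * L =
          (∑ h ∈ Finset.Ioc 0 y, ((χ h:ℝ) * ((x/h:ℕ):ℝ) - (x:ℝ) * ((χ h:ℝ)/h)))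
          + (∑ m ∈ Finset.Ioc 0 (x/(y+1)), (Schi χ (x/m) - Schi χ y))
          + (x:ℝ) * ((∑ h ∈ Finset.Ioc 0 y, (χ h:ℝ)/h) - L) := by
      intro y hy
      have e1 : ∑ h ∈ Finset.Ioc 0 y, ((χ h:ℝ) * ((x/h:ℕ):ℝ) - (x:ℝ) * ((χ h:ℝ)/h)) =
          (∑ h ∈ Finset.Ioc 0 y, (χ h:ℝ) * ((x/h:ℕ):ℝ))
            - (x:ℝ) * (∑ h ∈ Finset.Ioc 0 y, (χ h:ℝ)/h) := by
        rw [Finset.sum_sub_distrib, Finset.mul_sum]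
      rw [div_sum (fun h => (χ h : ℝ)) x,
        ← Finset.sum_Ioc_consecutive (fun h : ℕ => (χ h:ℝ) * ((x/h:ℕ):ℝ)) (Nat.zero_le y) hy,
        hyper2 χ x y, e1]
      ring
    have bound1 : ∀ y : ℕ,
        |∑ h ∈ Finset.Ioc 0 y, ((χ h:ℝ) * ((x/h:ℕ):ℝ) - (x:ℝ) * ((χ h:ℝ)/h))| ≤ y := by
      intro y
      calc |∑ h ∈ Finset.Ioc 0 y, ((χ h:ℝ) * ((x/h:ℕ):ℝ) - (x:ℝ) * ((χ h:ℝ)/h))|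
          ≤ ∑ h ∈ Finset.Ioc 0 y, |(χ h:ℝ) * ((x/h:ℕ):ℝ) - (x:ℝ) * ((χ h:ℝ)/h)| :=
            Finset.abs_sum_le_sum_abs _ _
        _ ≤ ∑ _h ∈ Finset.Ioc 0 y, (1:ℝ) := by
            apply Finset.sum_le_sum
            intro h hmem
            rw [Finset.mem_Ioc] at hmem
            have hterm : (χ h:ℝ) * ((x/h:ℕ):ℝ) - (x:ℝ) * ((χ h:ℝ)/h) =
                (χ h:ℝ) * (((x/h:ℕ):ℝ) - (x:ℝ)/h) := by ring
            rw [hterm, abs_mul]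
            calc |(χ h:ℝ)| * |((x/h:ℕ):ℝ) - (x:ℝ)/h| ≤ 1 * 1 :=
                mul_le_mul (abs_chi_le χ hv _) (floor_close x h hmem.1) (abs_nonneg _)
                  zero_le_one
              _ = 1 := by ring
        _ = y := by simp
    have bound2 : ∀ y : ℕ,
        |∑ m ∈ Finset.Ioc 0 (x/(y+1)), (Schi χ (x/m) - Schi χ y)| ≤
          ((x/(y+1) : ℕ):ℝ) * (2*D) := by
      intro y
      calc |∑ m ∈ Finset.Ioc 0 (x/(y+1)), (Schi χ (x/m) - Schi χ y)|
          ≤ ∑ m ∈ Finset.Ioc 0 (x/(y+1)), |Schi χ (x/m) - Schi χ y| :=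
            Finset.abs_sum_le_sum_abs _ _
        _ ≤ ∑ _m ∈ Finset.Ioc 0 (x/(y+1)), (2*(D:ℝ)) := by
            apply Finset.sum_le_sum
            intro m _
            calc |Schi χ (x/m) - Schi χ y| ≤ |Schi χ (x/m)| + |Schi χ y| := abs_sub _ _
              _ ≤ 2*(D:ℝ) := by have := hSD (x/m); have := hSD y; linarith
        _ = ((x/(y+1) : ℕ):ℝ) * (2*D) := by
            rw [Finset.sum_const, Nat.card_Ioc, nsmul_eq_mul, Nat.sub_zero]
    have tailmul : ∀ (y : ℕ) (B : ℝ),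
        (∀ N, y ≤ N → |∑ h ∈ Finset.Ioc y N, (χ h : ℝ) / h| ≤ B) →
        |(x:ℝ) * ((∑ h ∈ Finset.Ioc 0 y, (χ h:ℝ)/h) - L)| ≤ (x:ℝ) * B := by
      intro y B hB
      rw [abs_mul, Nat.abs_cast, abs_sub_comm]
      exact mul_le_mul_of_nonneg_left (tail_limit χ y B hB L hL) (Nat.cast_nonneg x)
    rcases le_or_gt D x with hDx | hDx
    · -- main regime : y = sqrt (D x)
      set y := Nat.sqrt (D*x) with hy
      have hyx : y ≤ x := by
        calc Nat.sqrt (D*x) ≤ Nat.sqrt (x^2) :=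
            Nat.sqrt_le_sqrt (by rw [pow_two]; exact Nat.mul_le_mul hDx le_rfl)
          _ = x := Nat.sqrt_eq' x
      have hsq1 : (y:ℝ) ≤ Real.sqrt ((D:ℝ)*x) := by
        have h1 : (y^2 : ℕ) ≤ D*x := Nat.sqrt_le' (D*x)
        have h2 : ((y:ℝ))^2 ≤ (D:ℝ)*x := by exact_mod_cast h1
        calc (y:ℝ) = Real.sqrt ((y:ℝ)^2) := (Real.sqrt_sq (Nat.cast_nonneg y)).symm
          _ ≤ Real.sqrt ((D:ℝ)*x) := Real.sqrt_le_sqrt h2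
      have hsq2 : Real.sqrt ((D:ℝ)*x) ≤ (y:ℝ)+1 := by
        have h1 : D*x < (y+1)^2 := Nat.lt_succ_sqrt' (D*x)
        have h2 : ((D:ℝ)*x) ≤ ((y:ℝ)+1)^2 := by
          have := h1.le
          push_cast at this ⊢
          exact_mod_cast this
        calc Real.sqrt ((D:ℝ)*x) ≤ Real.sqrt (((y:ℝ)+1)^2) := Real.sqrt_le_sqrt h2
          _ = (y:ℝ)+1 := Real.sqrt_sq (by positivity)
      have hkey : (D:ℝ)*x/((y:ℝ)+1) ≤ Real.sqrt ((D:ℝ)*x) := by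
        calc (D:ℝ)*x/((y:ℝ)+1) ≤ (D:ℝ)*x/Real.sqrt ((D:ℝ)*x) :=
            div_le_div_of_nonneg_left (by positivity) hsqDx hsq2
          _ = Real.sqrt ((D:ℝ)*x) := Real.div_sqrt
      have hE2 : ((x/(y+1) : ℕ):ℝ) * (2*(D:ℝ)) ≤ 2 * Real.sqrt ((D:ℝ)*x) := by
        have hcast : ((x/(y+1) : ℕ):ℝ) ≤ (x:ℝ)/((y:ℝ)+1) := by
          have := Nat.cast_div_le (α := ℝ) (m := x) (n := y+1)
          push_cast at this
          exact this
        calc ((x/(y+1) : ℕ):ℝ) * (2*(D:ℝ)) ≤ ((x:ℝ)/((y:ℝ)+1)) * (2*(D:ℝ)) := by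
              apply mul_le_mul_of_nonneg_right hcast (by positivity)
          _ = 2 * ((D:ℝ)*x/((y:ℝ)+1)) := by ring
          _ ≤ 2 * Real.sqrt ((D:ℝ)*x) := by linarith
      have hE3 : (x:ℝ) * (3*(D:ℝ)/((y:ℝ)+1)) ≤ 3 * Real.sqrt ((D:ℝ)*x) := by
        calc (x:ℝ) * (3*(D:ℝ)/((y:ℝ)+1)) = 3 * ((D:ℝ)*x/((y:ℝ)+1)) := by ring
          _ ≤ 3 * Real.sqrt ((D:ℝ)*x) := by linarith
      rw [decomp y hyx]
      have h1 := bound1 y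
      have h2 := bound2 y
      have h3 := tailmul y (3*(D:ℝ)/((y:ℝ)+1)) (fun N hN => tail_bound1 χ hSD y N hN)
      calc |_ + _ + _| ≤ _ + _ + _ := tri3 _ _ _
        _ ≤ 10 * Real.sqrt ((D:ℝ)*x) := by nlinarith [hsqDx.le, hsq1, hE2, hE3, h1, h2, h3]
    · -- degenerate regime : y = x
      have hdiv0 : x/(x+1) = 0 := Nat.div_eq_of_lt (Nat.lt_succ_self x)
      have hE2zero : (∑ m ∈ Finset.Ioc 0 (x/(x+1)), (Schi χ (x/m) - Schi χ x)) = 0 := by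
        rw [hdiv0]
        simp
      have hsx : Real.sqrt (x:ℝ) * Real.sqrt (x:ℝ) = (x:ℝ) := Real.mul_self_sqrt (by positivity)
      have hx1 : (x:ℝ) ≤ Real.sqrt ((D:ℝ)*x) := by
        have hDxr : (x:ℝ) ≤ (D:ℝ) := by exact_mod_cast hDx.le
        have h2 : ((x:ℝ))*x ≤ (D:ℝ)*x := by nlinarith
        calc (x:ℝ) = Real.sqrt ((x:ℝ)*(x:ℝ)) := (Real.sqrt_mul_self (Nat.cast_nonneg x)).symm
          _ ≤ Real.sqrt ((D:ℝ)*x) := Real.sqrt_le_sqrt h2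
      have hsx1 : 0 < Real.sqrt ((x:ℝ)+1) := Real.sqrt_pos.mpr (by positivity)
      have hdivx : (x:ℝ)/Real.sqrt ((x:ℝ)+1) ≤ Real.sqrt (x:ℝ) := by
        rw [div_le_iff₀ hsx1]
        calc (x:ℝ) = Real.sqrt (x:ℝ) * Real.sqrt (x:ℝ) := hsx.symm
          _ ≤ Real.sqrt (x:ℝ) * Real.sqrt ((x:ℝ)+1) := by
              apply mul_le_mul_of_nonneg_left (Real.sqrt_le_sqrt (by linarith)) (Real.sqrt_nonneg _)
      have hE3 : (x:ℝ) * (4 * Real.sqrt (D:ℝ) / Real.sqrt ((x:ℝ)+1)) ≤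
          4 * Real.sqrt ((D:ℝ)*x) := by
        calc (x:ℝ) * (4 * Real.sqrt (D:ℝ) / Real.sqrt ((x:ℝ)+1)) =
            4 * Real.sqrt (D:ℝ) * ((x:ℝ)/Real.sqrt ((x:ℝ)+1)) := by ring
          _ ≤ 4 * Real.sqrt (D:ℝ) * Real.sqrt (x:ℝ) := by
              apply mul_le_mul_of_nonneg_left hdivx (by positivity)
          _ = 4 * Real.sqrt ((D:ℝ)*x) := by rw [Real.sqrt_mul (by positivity)]; ring
      rw [decomp x le_rfl, hE2zero]
      have h1 := bound1 x
      have h3 := tailmul x (4 * Real.sqrt (D:ℝ) / Real.sqrt ((x:ℝ)+1))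
        (fun N hN => tail_bound2 χ hsq x N hN)
      calc |_ + 0 + _| ≤ _ + |(0:ℝ)| + _ := tri3 _ _ _
        _ ≤ 10 * Real.sqrt ((D:ℝ)*x) := by
            rw [abs_zero]
            nlinarith [hsqDx.le, hx1, hE3, h1, h3]
end

section
/- Let q ≥ 2 and 0 < α < 1/5. Then ∑_{1 ≤ r ≤ q-1, gcd(r,q) > q^{1/5 - α}} 1/r ≪ q^{-1/5 + 3α} for all sufficiently large q, where the sum is over residues r whose gcd with q exceeds q^{1/5-α}. -/
open Finset

/-- Sum over a `biUnion` is at most the double sum, for nonnegative weights. -/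
private lemma sum_biUnion_le_sum {ι α : Type*} [DecidableEq α] (s : Finset ι) (t : ι → Finset α)
    (f : α → ℝ) (hf : ∀ a, 0 ≤ f a) :
    ∑ x ∈ s.biUnion t, f x ≤ ∑ i ∈ s, ∑ x ∈ t i, f x := by
  classical
  induction s using Finset.induction_on with
  | empty => simp
  | @insert a s ha ih =>
    rw [Finset.biUnion_insert, Finset.sum_insert ha]
    have h1 : ∑ x ∈ t a ∪ s.biUnion t, f x ≤ ∑ x ∈ t a, f x + ∑ x ∈ s.biUnion t, f x := by
      have h2 := Finset.sum_union_inter (s₁ := t a) (s₂ := s.biUnion t) (f := f)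
      have h3 : 0 ≤ ∑ x ∈ t a ∩ s.biUnion t, f x :=
        Finset.sum_nonneg fun x _ => hf x
      linarith
    exact h1.trans (by linarith)

/-- The divisor bound: for `0 < ε` with `ε * log 2 ≤ 1`, `d(n) ≤ C n^ε`. -/
private lemma divisor_bound {ε : ℝ} (hε : 0 < ε) (hε1 : ε * Real.log 2 ≤ 1) :
    ∃ C : ℝ, 1 ≤ C ∧ ∀ n : ℕ, n ≠ 0 → (n.divisors.card : ℝ) ≤ C * (n : ℝ) ^ ε := by
  classical
  set c : ℝ := ε * Real.log 2 with hcdef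
  have hc0 : 0 < c := mul_pos hε (Real.log_pos one_lt_two)
  have hc1 : c ≤ 1 := hε1
  have h1c : 1 ≤ 1 / c := by rw [le_div_iff₀ hc0]; linarith
  set K : ℕ := ⌈(2 : ℝ) ^ (1 / ε)⌉₊ with hKdef
  refine ⟨(1 / c) ^ K, one_le_pow₀ h1c, ?_⟩
  · intro n hn
    -- pointwise bound over prime factors
    have key : ∀ p ∈ n.primeFactors,
        ((n.factorization p + 1 : ℕ) : ℝ) ≤
          (if p < K then 1 / c else 1) * (((p : ℝ) ^ (n.factorization p)) ^ ε) := by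
      intro p hp
      have hpp : p.Prime := Nat.prime_of_mem_primeFactors hp
      have hp2 : (2 : ℝ) ≤ (p : ℝ) := by exact_mod_cast hpp.two_le
      set a : ℕ := n.factorization p with hadef
      have hpa : ((p : ℝ) ^ a) ^ ε = (p : ℝ) ^ ((a : ℝ) * ε) := by
        rw [← Real.rpow_natCast (p : ℝ) a, ← Real.rpow_mul (by linarith)]
      by_cases hK : p < K
      · -- general bound : (a+1) ≤ (1/c) * p^{aε}
        simp only [hK, if_true]
        have h2a : ((2 : ℝ) ^ ((a : ℝ) * ε)) ≤ (p : ℝ) ^ ((a : ℝ) * ε) :=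
          Real.rpow_le_rpow (by norm_num) hp2 (by positivity)
        have hexp : (2 : ℝ) ^ ((a : ℝ) * ε) = Real.exp ((a : ℝ) * c) := by
          rw [Real.rpow_def_of_pos (by norm_num)]
          ring_nf
          congr 1; rw [hcdef]; ring
        have hlin : 1 + (a : ℝ) * c ≤ Real.exp ((a : ℝ) * c) := by
          have := Real.add_one_le_exp ((a : ℝ) * c)
          linarith
        have ha0 : (0 : ℝ) ≤ (a : ℝ) := Nat.cast_nonneg a
        have hfin : ((a + 1 : ℕ) : ℝ) * c ≤ 1 + (a : ℝ) * c := by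
          push_cast
          nlinarith
        rw [hpa]
        rw [div_mul_eq_mul_div, le_div_iff₀ hc0]
        calc ((a + 1 : ℕ) : ℝ) * c ≤ 1 + (a : ℝ) * c := hfin
          _ ≤ Real.exp ((a : ℝ) * c) := hlin
          _ = (2 : ℝ) ^ ((a : ℝ) * ε) := hexp.symm
          _ ≤ (p : ℝ) ^ ((a : ℝ) * ε) := h2a
          _ = 1 * (p : ℝ) ^ ((a : ℝ) * ε) := by ring
      · -- large prime : (a+1) ≤ p^{aε}
        simp only [hK, if_false, one_mul]
        have hpK : ((2 : ℝ) ^ (1 / ε)) ≤ (p : ℝ) := by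
          have h1 : (K : ℝ) ≤ (p : ℝ) := by exact_mod_cast Nat.le_of_not_lt hK
          exact (Nat.le_ceil _).trans h1
        have h2 : ((2 : ℝ) ^ (1 / ε)) ^ ((a : ℝ) * ε) ≤ (p : ℝ) ^ ((a : ℝ) * ε) :=
          Real.rpow_le_rpow (by positivity) hpK (by positivity)
        have h3 : ((2 : ℝ) ^ (1 / ε)) ^ ((a : ℝ) * ε) = (2 : ℝ) ^ (a : ℝ) := by
          rw [← Real.rpow_mul (by norm_num)]
          congr 1
          field_simp
        have h4 : ((a + 1 : ℕ) : ℝ) ≤ (2 : ℝ) ^ (a : ℝ) := by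
          rw [show ((a : ℝ)) = ((a : ℕ) : ℝ) from rfl, Real.rpow_natCast]
          exact_mod_cast Nat.succ_le_of_lt (Nat.lt_two_pow_self (n := a))
        rw [hpa]
        calc ((a + 1 : ℕ) : ℝ) ≤ (2 : ℝ) ^ (a : ℝ) := h4
          _ = ((2 : ℝ) ^ (1 / ε)) ^ ((a : ℝ) * ε) := h3.symm
          _ ≤ (p : ℝ) ^ ((a : ℝ) * ε) := h2
    -- assemble
    have hcard : (n.divisors.card : ℝ) =
        ∏ p ∈ n.primeFactors, ((n.factorization p + 1 : ℕ) : ℝ) := by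
      rw [Nat.card_divisors hn]
      push_cast
      rfl
    have hprodle : ∏ p ∈ n.primeFactors, ((n.factorization p + 1 : ℕ) : ℝ) ≤
        ∏ p ∈ n.primeFactors,
          ((if p < K then 1 / c else 1) * (((p : ℝ) ^ (n.factorization p)) ^ ε)) := by
      apply Finset.prod_le_prod
      · intro p _; positivity
      · exact key
    have hsplit : ∏ p ∈ n.primeFactors,
          ((if p < K then 1 / c else 1) * (((p : ℝ) ^ (n.factorization p)) ^ ε)) =
        (∏ p ∈ n.primeFactors, (if p < K then 1 / c else 1)) *
          ∏ p ∈ n.primeFactors, (((p : ℝ) ^ (n.factorization p)) ^ ε) := by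
      rw [Finset.prod_mul_distrib]
    have hw : (∏ p ∈ n.primeFactors, (if p < K then 1 / c else (1 : ℝ))) ≤ (1 / c) ^ K := by
      rw [Finset.prod_ite, Finset.prod_const, Finset.prod_const, one_pow, mul_one]
      apply pow_le_pow_right₀ h1c
      have : (n.primeFactors.filter fun p => p < K) ⊆ Finset.range K := by
        intro p hp
        simp only [Finset.mem_filter] at hp
        exact Finset.mem_range.mpr hp.2
      simpa using Finset.card_le_card this
    have hnpow : ∏ p ∈ n.primeFactors, (((p : ℝ) ^ (n.factorization p)) ^ ε) = (n : ℝ) ^ ε := by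
      rw [Real.finset_prod_rpow _ _ (fun p _ => by positivity)]
      congr 1
      have hfac : ∏ p ∈ n.primeFactors, p ^ n.factorization p = n := by
        rw [← Nat.support_factorization]
        exact Nat.factorization_prod_pow_eq_self hn
      calc ∏ p ∈ n.primeFactors, ((p : ℝ) ^ (n.factorization p))
          = ((∏ p ∈ n.primeFactors, p ^ (n.factorization p) : ℕ) : ℝ) := by push_cast; rfl
        _ = (n : ℝ) := by rw [hfac]
    have hn1 : (0 : ℝ) ≤ (n : ℝ) ^ ε := by positivity
    calc (n.divisors.card : ℝ)
        = ∏ p ∈ n.primeFactors, ((n.factorization p + 1 : ℕ) : ℝ) := hcard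
      _ ≤ (∏ p ∈ n.primeFactors, (if p < K then 1 / c else 1)) *
            ∏ p ∈ n.primeFactors, (((p : ℝ) ^ (n.factorization p)) ^ ε) := by
          rw [← hsplit]; exact hprodle
      _ ≤ (1 / c) ^ K * (n : ℝ) ^ ε := by
          rw [hnpow]
          apply mul_le_mul_of_nonneg_right hw hn1

/-- For `0 < α < 1/5`, `∑_{1 ≤ r ≤ q-1, gcd(r,q) > q^{1/5-α}} 1/r ≪ q^{-1/5+3α}`
for all sufficiently large `q`. -/
theorem sum_recip_large_gcd (α : ℝ) (hα0 : 0 < α) (hα : α < 1 / 5) :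
    ∃ C : ℝ, 0 < C ∧ ∃ Q₀ : ℕ, ∀ q : ℕ, Q₀ ≤ q →
      ∑ r ∈ (Finset.Ico 1 q).filter
          (fun r => (q : ℝ) ^ ((1 : ℝ) / 5 - α) < (Nat.gcd r q : ℝ)),
        (1 : ℝ) / (r : ℝ) ≤
      C * (q : ℝ) ^ (-(1 : ℝ) / 5 + 3 * α) := by
  classical
  have hlog2 : Real.log 2 < 1 := by
    have := Real.log_two_lt_d9
    linarith
  have hεlog : α * Real.log 2 ≤ 1 := by
    have h1 : 0 < Real.log 2 := Real.log_pos one_lt_two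
    nlinarith
  obtain ⟨C₁, hC₁, hdiv⟩ := divisor_bound hα0 hεlog
  refine ⟨C₁ * (1 + 1 / α), by positivity, 1, fun q hq => ?_⟩
  have hqn : q ≠ 0 := by omega
  have hq0 : (0 : ℝ) < (q : ℝ) := by exact_mod_cast Nat.pos_of_ne_zero hqn
  have hq1 : (1 : ℝ) ≤ (q : ℝ) := by exact_mod_cast hq
  set T : ℝ := (q : ℝ) ^ ((1 : ℝ) / 5 - α) with hTdef
  have hT0 : 0 < T := Real.rpow_pos_of_pos hq0 _
  set D : Finset ℕ := q.divisors.filter (fun d => T < (d : ℝ)) with hDdef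
  -- Step 1: each bad residue r is d*m for a divisor d > T of q and m ≤ q/d
  have hsub : (Finset.Ico 1 q).filter (fun r => T < (Nat.gcd r q : ℝ)) ⊆
      D.biUnion (fun d => (Finset.Icc 1 (q / d)).image (fun m => d * m)) := by
    intro r hr
    simp only [Finset.mem_filter, Finset.mem_Ico] at hr
    obtain ⟨⟨hr1, hrq⟩, hgcd⟩ := hr
    set d := Nat.gcd r q with hddef
    have hd_dvd_q : d ∣ q := Nat.gcd_dvd_right r q
    have hd_dvd_r : d ∣ r := Nat.gcd_dvd_left r q
    have hd0 : 0 < d := Nat.gcd_pos_of_pos_left _ (by omega)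
    refine Finset.mem_biUnion.2 ⟨d, ?_, ?_⟩
    · exact Finset.mem_filter.2 ⟨Nat.mem_divisors.2 ⟨hd_dvd_q, hqn⟩, hgcd⟩
    · refine Finset.mem_image.2 ⟨r / d, ?_, Nat.mul_div_cancel' hd_dvd_r⟩
      refine Finset.mem_Icc.2 ⟨?_, Nat.div_le_div_right (le_of_lt hrq)⟩
      exact (Nat.one_le_div_iff hd0).2 (Nat.le_of_dvd (by omega) hd_dvd_r)
  have hfnonneg : ∀ r : ℕ, 0 ≤ (1 : ℝ) / (r : ℝ) := fun r => by positivity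
  -- Step 2: inner sums
  have hinner : ∀ d ∈ D,
      ∑ r ∈ (Finset.Icc 1 (q / d)).image (fun m => d * m), (1 : ℝ) / (r : ℝ) ≤
        (1 / T) * (1 + Real.log q) := by
    intro d hd
    simp only [hDdef, Finset.mem_filter, Nat.mem_divisors] at hd
    obtain ⟨⟨hdq, _⟩, hdT⟩ := hd
    have hd0 : 0 < d := by
      rcases Nat.eq_zero_or_pos d with h | h
      · exfalso; rw [h] at hdT; simp at hdT; linarith
      · exact h
    have hd0R : (0 : ℝ) < (d : ℝ) := by exact_mod_cast hd0
    have hNq : q / d ≤ q := Nat.div_le_self q d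
    have hinj : Set.InjOn (fun m => d * m) (Finset.Icc 1 (q / d)) := by
      intro x _ y _ h
      exact Nat.eq_of_mul_eq_mul_left hd0 h
    rw [Finset.sum_image hinj]
    have heq : ∀ m ∈ Finset.Icc 1 (q / d), (1 : ℝ) / ((d * m : ℕ) : ℝ) =
        (1 / (d : ℝ)) * ((m : ℝ))⁻¹ := by
      intro m _
      push_cast
      rw [one_div, mul_inv, one_div]
    rw [Finset.sum_congr rfl heq, ← Finset.mul_sum]
    have hharm : ∑ m ∈ Finset.Icc 1 (q / d), ((m : ℝ))⁻¹ ≤ 1 + Real.log q := by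
      have h1 : ((harmonic (q / d) : ℚ) : ℝ) = ∑ m ∈ Finset.Icc 1 (q / d), ((m : ℝ))⁻¹ := by
        rw [harmonic_eq_sum_Icc]
        push_cast
        rfl
      have h2 := harmonic_le_one_add_log (q / d)
      rw [h1] at h2
      refine h2.trans ?_
      have : Real.log ((q / d : ℕ) : ℝ) ≤ Real.log q := by
        rcases Nat.eq_zero_or_pos (q / d) with h | h
        · rw [h]; simp
          exact Real.log_nonneg hq1
        · apply Real.log_le_log (by exact_mod_cast h)
          exact_mod_cast hNq
      linarith
    have hdT' : 1 / (d : ℝ) ≤ 1 / T := by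
      apply one_div_le_one_div_of_le hT0 (le_of_lt hdT)
    have hsum0 : 0 ≤ ∑ m ∈ Finset.Icc 1 (q / d), ((m : ℝ))⁻¹ :=
      Finset.sum_nonneg fun m _ => by positivity
    calc (1 / (d : ℝ)) * ∑ m ∈ Finset.Icc 1 (q / d), ((m : ℝ))⁻¹
        ≤ (1 / T) * ∑ m ∈ Finset.Icc 1 (q / d), ((m : ℝ))⁻¹ :=
          mul_le_mul_of_nonneg_right hdT' hsum0
      _ ≤ (1 / T) * (1 + Real.log q) := by
          apply mul_le_mul_of_nonneg_left hharm (by positivity)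
  -- Step 3: count the divisors and the log factor
  have hcardD : (D.card : ℝ) ≤ C₁ * (q : ℝ) ^ α := by
    refine le_trans ?_ (hdiv q hqn)
    exact_mod_cast Finset.card_le_card (Finset.filter_subset _ _)
  have hlogq : 1 + Real.log q ≤ (1 + 1 / α) * (q : ℝ) ^ α := by
    have h1 : Real.log q ≤ (q : ℝ) ^ α / α := Real.log_le_rpow_div hq0.le hα0
    have h2 : (1 : ℝ) ≤ (q : ℝ) ^ α := Real.one_le_rpow hq1 hα0.le
    have : (1 + 1 / α) * (q : ℝ) ^ α = (q : ℝ) ^ α + (q : ℝ) ^ α / α := by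
      field_simp
    rw [this]
    have h3 : Real.log q ≤ (q : ℝ) ^ α / α := h1
    linarith
  -- assemble
  have hmain : ∑ r ∈ (Finset.Ico 1 q).filter (fun r => T < (Nat.gcd r q : ℝ)),
      (1 : ℝ) / (r : ℝ) ≤ (C₁ * (q : ℝ) ^ α) * ((1 / T) * ((1 + 1 / α) * (q : ℝ) ^ α)) := by
    calc ∑ r ∈ (Finset.Ico 1 q).filter (fun r => T < (Nat.gcd r q : ℝ)), (1 : ℝ) / (r : ℝ)
        ≤ ∑ r ∈ D.biUnion (fun d => (Finset.Icc 1 (q / d)).image (fun m => d * m)),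
            (1 : ℝ) / (r : ℝ) :=
          Finset.sum_le_sum_of_subset_of_nonneg hsub (fun i _ _ => hfnonneg i)
      _ ≤ ∑ d ∈ D, ∑ r ∈ (Finset.Icc 1 (q / d)).image (fun m => d * m), (1 : ℝ) / (r : ℝ) :=
          sum_biUnion_le_sum D _ _ hfnonneg
      _ ≤ ∑ _d ∈ D, (1 / T) * (1 + Real.log q) := Finset.sum_le_sum hinner
      _ = (D.card : ℝ) * ((1 / T) * (1 + Real.log q)) := by
          rw [Finset.sum_const, nsmul_eq_mul]
      _ ≤ (C₁ * (q : ℝ) ^ α) * ((1 / T) * ((1 + 1 / α) * (q : ℝ) ^ α)) := by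
          have hlogq0 : 0 ≤ 1 + Real.log q := by
            have := Real.log_nonneg hq1; linarith
          apply mul_le_mul hcardD
          · exact mul_le_mul_of_nonneg_left hlogq (by positivity)
          · positivity
          · positivity
  refine hmain.trans (le_of_eq ?_)
  have hTinv : 1 / T = (q : ℝ) ^ (α - (1 : ℝ) / 5) := by
    rw [hTdef, one_div, ← Real.rpow_neg hq0.le]
    congr 1
    ring
  rw [hTinv]
  rw [show (C₁ * (q : ℝ) ^ α) * ((q : ℝ) ^ (α - (1 : ℝ) / 5) * ((1 + 1 / α) * (q : ℝ) ^ α)) =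
      (C₁ * (1 + 1 / α)) * ((q : ℝ) ^ α * (q : ℝ) ^ α * (q : ℝ) ^ (α - (1 : ℝ) / 5)) by ring]
  congr 1
  rw [← Real.rpow_add hq0, ← Real.rpow_add hq0]
  congr 1
  ring
end
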